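/- Let q be a prime power, m ≥ 2n−2, n ≤ q+2, and β a generator of a polynomial basis (1, β, ..., β^{m−1}) of F_{q^m} over F_q. Let a_1, ..., a_{n−3} be distinct nonzero elements of F_q. Then the 2×n matrix G over F_{q^m} with rows (1, 0, β^2, β^3, ..., β^{n−2}, β^n) and (0, 1, a_1β, a_2β^2, ..., a_{n−3}β^{n−3}, β^{n−2}) generates a systematic MRD code: every nonzero F_{q^m}-linear combination of the rows, expanded to an m×n matrix over F_q, has rank at least n−1. -/

import Mathlib

set_option maxHeartbeats 1000000

section MRDAux

open Polynomial Finset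

variable {F : Type*} [Field F]




/-- shape of the pair of polynomials (A = P, B = X·Q) attached to a vector. -/
structure MyShape (n : ℕ) (a : ℕ → F) (A B : F[X]) : Prop where
  hA_top : ∀ k, n < k → A.coeff k = 0
  hA1 : A.coeff 1 = 0
  hA_pred : A.coeff (n-1) = 0
  hB_top : ∀ k, n-1 < k → B.coeff k = 0
  hB0 : B.coeff 0 = 0
  hmid : ∀ j, 2 ≤ j → j ≤ n-2 → B.coeff j = a (j-1) * A.coeff j
  hlink : B.coeff (n-1) = A.coeff n

lemma MyShape.combo {n : ℕ} {a : ℕ → F} {A B A' B' : F[X]}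
    (S : MyShape n a A B) (S' : MyShape n a A' B') (t : F) :
    MyShape n a (A' - C t * A) (B' - C t * B) := by
  constructor
  · intro k hk; simp [S.hA_top k hk, S'.hA_top k hk]
  · simp [S.hA1, S'.hA1]
  · simp [S.hA_pred, S'.hA_pred]
  · intro k hk; simp [S.hB_top k hk, S'.hB_top k hk]
  · simp [S.hB0, S'.hB0]
  · intro j h2 h3; simp [S.hmid j h2 h3, S'.hmid j h2 h3]; ring
  · simp [S.hlink, S'.hlink]

/-- classification of degrees of elements of `W`. -/
lemma classify {n : ℕ} (hn : 3 ≤ n) (a : ℕ → F)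
    (ha0 : ∀ i, 1 ≤ i → i ≤ n - 3 → a i ≠ 0)
    (A₁ B₁ f : F[X]) (hA₁ : A₁ ≠ 0) (hB₁ : B₁ ≠ 0) (hf : f ≠ 0)
    (S : MyShape n a (f * A₁) (f * B₁)) :
    (f.natDegree + A₁.natDegree = 0 ∧ f.natDegree + B₁.natDegree = 1)
    ∨ (2 ≤ f.natDegree + A₁.natDegree ∧ f.natDegree + A₁.natDegree ≤ n-2
        ∧ f.natDegree + B₁.natDegree = f.natDegree + A₁.natDegree
        ∧ B₁.leadingCoeff = a (f.natDegree + A₁.natDegree - 1) * A₁.leadingCoeff)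
    ∨ (f.natDegree + A₁.natDegree = n ∧ f.natDegree + B₁.natDegree = n-1) := by
  have hfA : f * A₁ ≠ 0 := mul_ne_zero hf hA₁
  have hfB : f * B₁ ≠ 0 := mul_ne_zero hf hB₁
  set u := (f * A₁).natDegree with hu
  set v := (f * B₁).natDegree with hv
  have hud : u = f.natDegree + A₁.natDegree := natDegree_mul hf hA₁
  have hvd : v = f.natDegree + B₁.natDegree := natDegree_mul hf hB₁
  have hlcA : (f * A₁).coeff u ≠ 0 := by
    rw [coeff_natDegree]; exact leadingCoeff_ne_zero.mpr hfA
  have hlcB : (f * B₁).coeff v ≠ 0 := by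
    rw [coeff_natDegree]; exact leadingCoeff_ne_zero.mpr hfB
  -- bounds
  have hun : u ≤ n := by
    by_contra h; exact hlcA (S.hA_top u (by omega))
  have hvn : v ≤ n - 1 := by
    by_contra h; exact hlcB (S.hB_top v (by omega))
  have hv0 : v ≠ 0 := fun h => hlcB (h ▸ S.hB0)
  have hu1 : u ≠ 1 := fun h => hlcA (h ▸ S.hA1)
  have hun1 : u ≠ n - 1 := fun h => hlcA (h ▸ S.hA_pred)
  -- case u = n
  rcases (by omega : u = 0 ∨ (2 ≤ u ∧ u ≤ n - 2) ∨ u = n) with h0 | hmid | htop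
  · -- u = 0 : show v = 1
    left
    refine ⟨by rw [← hud]; exact h0, ?_⟩
    rw [← hvd]
    rcases (by omega : v = 1 ∨ (2 ≤ v ∧ v ≤ n-2) ∨ v = n-1) with h | h | h
    · exact h
    · exfalso
      have := S.hmid v h.1 h.2
      rw [coeff_eq_zero_of_natDegree_lt (by omega : (f*A₁).natDegree < v)] at this
      exact hlcB (by rw [this, mul_zero])
    · exfalso
      have := S.hlink
      rw [← h, coeff_eq_zero_of_natDegree_lt (by omega : (f*A₁).natDegree < n)] at this
      exact hlcB this
  · -- middle
    right; left
    have hbu : (f * B₁).coeff u ≠ 0 := by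
      rw [S.hmid u hmid.1 hmid.2]
      exact mul_ne_zero (ha0 (u-1) (by omega) (by omega)) hlcA
    have huv : u ≤ v := le_natDegree_of_ne_zero hbu
    have hvu : v = u := by
      rcases (by omega : v = u ∨ (u < v ∧ 2 ≤ v ∧ v ≤ n - 2) ∨ v = n - 1) with h | h | h
      · exact h
      · exfalso
        have := S.hmid v h.2.1 h.2.2
        rw [coeff_eq_zero_of_natDegree_lt (by omega : (f*A₁).natDegree < v)] at this
        exact hlcB (by rw [this, mul_zero])
      · exfalso
        have := S.hlink
        rw [← h] at this
        have h2 : (f * A₁).coeff n ≠ 0 := by rw [← this]; exact hlcB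
        have : n ≤ u := le_natDegree_of_ne_zero h2
        omega
    have hlead : f.leadingCoeff * B₁.leadingCoeff
        = a (u - 1) * (f.leadingCoeff * A₁.leadingCoeff) := by
      have h1 : (f * B₁).coeff v = f.leadingCoeff * B₁.leadingCoeff := by
        rw [hv, coeff_natDegree, leadingCoeff_mul]
      have h2 : (f * A₁).coeff u = f.leadingCoeff * A₁.leadingCoeff := by
        rw [hu, coeff_natDegree, leadingCoeff_mul]
      rw [← h1, ← h2, hvu, S.hmid u hmid.1 hmid.2]
    have hflc : f.leadingCoeff ≠ 0 := leadingCoeff_ne_zero.mpr hf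
    refine ⟨by omega, by omega, by omega, ?_⟩
    rw [← hud]
    apply mul_left_cancel₀ hflc
    rw [hlead]; ring
  · -- u = n
    right; right
    refine ⟨by rw [← hud]; exact htop, ?_⟩
    have hbn : (f * B₁).coeff (n-1) ≠ 0 := by
      rw [S.hlink, ← htop]; exact hlcA
    have : n - 1 ≤ v := le_natDegree_of_ne_zero hbn
    omega

lemma samedeg {n : ℕ} (hn : 3 ≤ n) (a : ℕ → F)
    (ha0 : ∀ i, 1 ≤ i → i ≤ n - 3 → a i ≠ 0)
    (hainj : ∀ i j, 1 ≤ i → i ≤ n - 3 → 1 ≤ j → j ≤ n - 3 → a i = a j → i = j)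
    (A₁ B₁ f g : F[X]) (hA₁ : A₁ ≠ 0) (hB₁ : B₁ ≠ 0) (hf : f ≠ 0) (hg : g ≠ 0)
    (Sf : MyShape n a (f * A₁) (f * B₁)) (Sg : MyShape n a (g * A₁) (g * B₁)) :
    f.natDegree = g.natDegree := by
  have hA0 : A₁.leadingCoeff ≠ 0 := leadingCoeff_ne_zero.mpr hA₁
  rcases classify hn a ha0 A₁ B₁ f hA₁ hB₁ hf Sf with hF | hF | hF <;>
    rcases classify hn a ha0 A₁ B₁ g hA₁ hB₁ hg Sg with hG | hG | hG
  · omega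
  · omega
  · omega
  · omega
  · -- middle middle
    obtain ⟨hf2, hfn, hfv, hfl⟩ := hF
    obtain ⟨hg2, hgn, hgv, hgl⟩ := hG
    have : a (f.natDegree + A₁.natDegree - 1) = a (g.natDegree + A₁.natDegree - 1) :=
      mul_right_cancel₀ hA0 (hfl ▸ hgl ▸ rfl)
    have := hainj _ _ (by omega) (by omega) (by omega) (by omega) this
    omega
  · omega
  · omega
  · omega
  · omega

lemma W_prop {n : ℕ} (hn : 3 ≤ n) (a : ℕ → F)
    (ha0 : ∀ i, 1 ≤ i → i ≤ n - 3 → a i ≠ 0)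
    (hainj : ∀ i j, 1 ≤ i → i ≤ n - 3 → 1 ≤ j → j ≤ n - 3 → a i = a j → i = j)
    (A₁ B₁ d h : F[X]) (hA₁ : A₁ ≠ 0) (hB₁ : B₁ ≠ 0) (hd : d ≠ 0) (hh : h ≠ 0)
    (Sd : MyShape n a (d * A₁) (d * B₁)) (Sh : MyShape n a (h * A₁) (h * B₁)) :
    ∃ t : F, t ≠ 0 ∧ h = C t * d := by
  have hdeg : d.natDegree = h.natDegree :=
    samedeg hn a ha0 hainj A₁ B₁ d h hA₁ hB₁ hd hh Sd Sh
  set t := h.leadingCoeff / d.leadingCoeff with ht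
  have hdlc : d.leadingCoeff ≠ 0 := leadingCoeff_ne_zero.mpr hd
  have hhlc : h.leadingCoeff ≠ 0 := leadingCoeff_ne_zero.mpr hh
  have htne : t ≠ 0 := div_ne_zero hhlc hdlc
  set k := h - C t * d with hk
  have hkA : k * A₁ = h * A₁ - C t * (d * A₁) := by rw [hk]; ring
  have hkB : k * B₁ = h * B₁ - C t * (d * B₁) := by rw [hk]; ring
  have Sk : MyShape n a (k * A₁) (k * B₁) := by
    rw [hkA, hkB]; exact Sd.combo Sh t
  have hk0 : k = 0 := by
    by_contra hk0
    have hdeg2 : k.natDegree = d.natDegree :=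
      samedeg hn a ha0 hainj A₁ B₁ k d hA₁ hB₁ hk0 hd Sk Sd
    have hck : k.coeff (d.natDegree) = 0 := by
      rw [hk, coeff_sub, coeff_C_mul, hdeg, coeff_natDegree, ← hdeg, coeff_natDegree,
        ht, div_mul_cancel₀ _ hdlc, sub_self]
    rw [← hdeg2, coeff_natDegree] at hck
    exact leadingCoeff_ne_zero.mpr hk0 hck
  refine ⟨t, htne, ?_⟩
  have := sub_eq_zero.mp hk0
  rw [this]

lemma polyMain {n : ℕ} (hn : 3 ≤ n) (a : ℕ → F)
    (ha0 : ∀ i, 1 ≤ i → i ≤ n - 3 → a i ≠ 0)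
    (hainj : ∀ i j, 1 ≤ i → i ≤ n - 3 → 1 ≤ j → j ≤ n - 3 → a i = a j → i = j)
    (A B A' B' : F[X]) (SA : MyShape n a A B) (SA' : MyShape n a A' B')
    (hrel : A * B' = A' * B) (hA : A ≠ 0) (hB : B ≠ 0) (hA' : A' ≠ 0) (hB' : B' ≠ 0) :
    ∃ t : F, t ≠ 0 ∧ A' = C t * A ∧ B' = C t * B := by
  classical
  set g := GCDMonoid.gcd A B with hg
  have hg0 : g ≠ 0 := gcd_ne_zero_of_left hA
  set A₁ := A / g with hA₁d
  set B₁ := B / g with hB₁d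
  have hAfac : g * A₁ = A := EuclideanDomain.mul_div_cancel' hg0 (gcd_dvd_left A B)
  have hBfac : g * B₁ = B := EuclideanDomain.mul_div_cancel' hg0 (gcd_dvd_right A B)
  have hA₁ : A₁ ≠ 0 := left_div_gcd_ne_zero hA
  have hB₁ : B₁ ≠ 0 := right_div_gcd_ne_zero hB
  have hcop : IsCoprime A₁ B₁ := isCoprime_div_gcd_div_gcd hB
  have hrel2 : A₁ * B' = A' * B₁ := by
    apply mul_left_cancel₀ hg0
    calc g * (A₁ * B') = (g * A₁) * B' := by ring
    _ = A * B' := by rw [hAfac]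
    _ = A' * B := hrel
    _ = A' * (g * B₁) := by rw [hBfac]
    _ = g * (A' * B₁) := by ring
  have hdvd : A₁ ∣ A' := hcop.dvd_of_dvd_mul_right ⟨B', hrel2.symm⟩
  obtain ⟨h, hh⟩ := hdvd
  have hh0 : h ≠ 0 := by rintro rfl; simp at hh; exact hA' hh
  have hB'h : B' = h * B₁ := by
    apply mul_left_cancel₀ hA₁
    rw [hrel2, hh]; ring
  have Sd : MyShape n a (g * A₁) (g * B₁) := by rw [hAfac, hBfac]; exact SA
  have Sh : MyShape n a (h * A₁) (h * B₁) := by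
    rw [← hB'h, (by rw [hh]; ring : h * A₁ = A')]; exact SA'
  obtain ⟨t, ht0, hteq⟩ := W_prop hn a ha0 hainj A₁ B₁ g h hA₁ hB₁ hg0 hh0 Sd Sh
  refine ⟨t, ht0, ?_, ?_⟩
  · rw [hh, hteq, ← hAfac]; ring
  · rw [hB'h, hteq, ← hBfac]; ring

/-- extend a `Fin n`-vector by zero. -/
def xe {n : ℕ} (x : Fin n → F) (j : ℕ) : F := if h : j < n then x ⟨j, h⟩ else 0

noncomputable def Apoly (n : ℕ) (x : Fin n → F) : F[X] :=
  C (xe x 0) + (∑ j ∈ Finset.Icc 2 (n-2), C (xe x j) * X ^ j) + C (xe x (n-1)) * X ^ n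

noncomputable def Bpoly (n : ℕ) (a : ℕ → F) (x : Fin n → F) : F[X] :=
  C (xe x 1) * X + (∑ j ∈ Finset.Icc 2 (n-2), C (a (j-1) * xe x j) * X ^ j)
    + C (xe x (n-1)) * X ^ (n-1)

lemma coeff_sum_C_mul_X_pow (s : Finset ℕ) (w : ℕ → F) (k : ℕ) :
    (∑ j ∈ s, C (w j) * X ^ j).coeff k = if k ∈ s then w k else 0 := by
  rw [finset_sum_coeff]
  simp only [coeff_C_mul, coeff_X_pow, mul_ite, mul_one, mul_zero]
  simp only [eq_comm (a := k)]
  rw [Finset.sum_ite_eq' s k w]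

lemma coeff_Apoly (n : ℕ) (x : Fin n → F) (k : ℕ) :
    (Apoly n x).coeff k = (if k = 0 then xe x 0 else 0)
      + (if k ∈ Finset.Icc 2 (n-2) then xe x k else 0)
      + (if k = n then xe x (n-1) else 0) := by
  simp only [Apoly, coeff_add, coeff_C_mul, coeff_C, coeff_X_pow,
    coeff_sum_C_mul_X_pow, mul_ite, mul_one, mul_zero]

lemma coeff_Bpoly (n : ℕ) (a : ℕ → F) (x : Fin n → F) (k : ℕ) :
    (Bpoly n a x).coeff k = (if k = 1 then xe x 1 else 0)
      + (if k ∈ Finset.Icc 2 (n-2) then a (k-1) * xe x k else 0)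
      + (if k = n-1 then xe x (n-1) else 0) := by
  simp only [Bpoly, coeff_add, coeff_C_mul, coeff_X_pow,
    coeff_sum_C_mul_X_pow, mul_ite, mul_one, mul_zero]
  congr 2
  rw [coeff_X]
  by_cases h : k = 1 <;> simp [h, eq_comm]

lemma shape_AB {n : ℕ} (hn : 3 ≤ n) (a : ℕ → F) (x : Fin n → F) : MyShape n a (Apoly n x) (Bpoly n a x) := by
  constructor
  · intro k hk
    rw [coeff_Apoly]
    have h1 : ¬ (k = 0) := by omega
    have h2 : ¬ (k ∈ Finset.Icc 2 (n-2)) := by simp [Finset.mem_Icc]; omega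
    have h3 : ¬ (k = n) := by omega
    simp [h1, h2, h3]
  · rw [coeff_Apoly]
    have h2 : ¬ ((1:ℕ) ∈ Finset.Icc 2 (n-2)) := by simp [Finset.mem_Icc]
    simp [h2]; omega
  · rw [coeff_Apoly]
    have h1 : ¬ (n - 1 = 0) := by omega
    have h2 : ¬ (n-1 ∈ Finset.Icc 2 (n-2)) := by simp [Finset.mem_Icc]; omega
    have h3 : ¬ (n-1 = n) := by omega
    simp [h1, h2, h3]
  · intro k hk
    rw [coeff_Bpoly]
    have h1 : ¬ (k = 1) := by omega
    have h2 : ¬ (k ∈ Finset.Icc 2 (n-2)) := by simp [Finset.mem_Icc]; omega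
    have h3 : ¬ (k = n-1) := by omega
    simp [h1, h2, h3]
  · rw [coeff_Bpoly]
    have h2 : ¬ ((0:ℕ) ∈ Finset.Icc 2 (n-2)) := by simp [Finset.mem_Icc]
    have h3 : ¬ (0 = n-1) := by omega
    simp [h2, h3]
  · intro j h2j hjn
    rw [coeff_Bpoly, coeff_Apoly]
    have h1 : ¬ (j = 1) := by omega
    have h1' : ¬ (j = 0) := by omega
    have h2 : j ∈ Finset.Icc 2 (n-2) := by simp [Finset.mem_Icc]; omega
    have h3 : ¬ (j = n-1) := by omega
    have h4 : ¬ (j = n) := by omega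
    simp [h1, h1', h2, h3, h4]
  · rw [coeff_Bpoly, coeff_Apoly]
    have h1 : ¬ (n-1 = 1) := by omega
    have h1' : ¬ (n = 0) := by omega
    have h2 : ¬ (n-1 ∈ Finset.Icc 2 (n-2)) := by simp [Finset.mem_Icc]; omega
    have h2' : ¬ (n ∈ Finset.Icc 2 (n-2)) := by simp [Finset.mem_Icc]; omega
    have h3 : ¬ (n = n-1) := by omega
    simp [h1, h1', h2, h2', h3]

lemma xe_val {n : ℕ} (x : Fin n → F) (j : Fin n) : xe x (j : ℕ) = x j := by
  simp [xe, j.isLt]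

-- specific coefficients
lemma cA0 {n : ℕ} (hn : 3 ≤ n) (x : Fin n → F) : (Apoly n x).coeff 0 = xe x 0 := by
  rw [coeff_Apoly]
  have h2 : ¬ ((0:ℕ) ∈ Finset.Icc 2 (n-2)) := by simp
  have h3 : ¬ ((0:ℕ) = n) := by omega
  simp [h2, h3]

lemma cAn {n : ℕ} (hn : 3 ≤ n) (x : Fin n → F) : (Apoly n x).coeff n = xe x (n-1) := by
  rw [coeff_Apoly]
  have h1 : ¬ (n = 0) := by omega
  have h2 : ¬ (n ∈ Finset.Icc 2 (n-2)) := by simp [Finset.mem_Icc]; omega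
  simp [h1, h2]

lemma cAmid {n : ℕ} (hn : 3 ≤ n) (x : Fin n → F) (j : ℕ) (h2 : 2 ≤ j) (hj : j ≤ n-2) :
    (Apoly n x).coeff j = xe x j := by
  rw [coeff_Apoly]
  have h1 : ¬ (j = 0) := by omega
  have hmem : j ∈ Finset.Icc 2 (n-2) := by simp [Finset.mem_Icc]; omega
  have h3 : ¬ (j = n) := by omega
  simp [h1, hmem, h3]

lemma cB1 {n : ℕ} (hn : 3 ≤ n) (a : ℕ → F) (x : Fin n → F) :
    (Bpoly n a x).coeff 1 = xe x 1 := by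
  rw [coeff_Bpoly]
  have h2 : ¬ ((1:ℕ) ∈ Finset.Icc 2 (n-2)) := by simp
  have h3 : ¬ ((1:ℕ) = n-1) := by omega
  simp [h2, h3]

lemma cBmid {n : ℕ} (hn : 3 ≤ n) (a : ℕ → F) (x : Fin n → F) (j : ℕ)
    (h2 : 2 ≤ j) (hj : j ≤ n-2) :
    (Bpoly n a x).coeff j = a (j-1) * xe x j := by
  rw [coeff_Bpoly]
  have h1 : ¬ (j = 1) := by omega
  have hmem : j ∈ Finset.Icc 2 (n-2) := by simp [Finset.mem_Icc]; omega
  have h3 : ¬ (j = n-1) := by omega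
  simp [h1, hmem, h3]

lemma cBn1 {n : ℕ} (hn : 3 ≤ n) (a : ℕ → F) (x : Fin n → F) :
    (Bpoly n a x).coeff (n-1) = xe x (n-1) := by
  rw [coeff_Bpoly]
  have h1 : ¬ (n-1 = 1) := by omega
  have h2 : ¬ (n-1 ∈ Finset.Icc 2 (n-2)) := by simp [Finset.mem_Icc]; omega
  simp [h1, h2]

/-- recover the proportionality of vectors from that of polynomials -/
lemma vec_smul {n : ℕ} (hn : 3 ≤ n) (a : ℕ → F)
    (ha0 : ∀ i, 1 ≤ i → i ≤ n - 3 → a i ≠ 0) (t : F) (x x' : Fin n → F)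
    (hA : Apoly n x' = C t * Apoly n x) (hB : Bpoly n a x' = C t * Bpoly n a x) :
    x' = t • x := by
  funext j
  have hj := j.isLt
  show x' j = t * x j
  rw [← xe_val x' j, ← xe_val x j]
  rcases (by omega : (j:ℕ) = 0 ∨ (j:ℕ) = 1 ∨ (2 ≤ (j:ℕ) ∧ (j:ℕ) ≤ n-2) ∨ (j:ℕ) = n-1)
    with h | h | h | h
  · rw [h, ← cA0 hn x', ← cA0 hn x, hA, coeff_C_mul]
  · rw [h, ← cB1 hn a x', ← cB1 hn a x, hB, coeff_C_mul]
  · rw [← cAmid hn x' _ h.1 h.2, ← cAmid hn x _ h.1 h.2, hA, coeff_C_mul]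
  · rw [h, ← cAn hn x', ← cAn hn x, hA, coeff_C_mul]

/-- if both polynomials vanish, the vector vanishes -/
lemma vec_zero {n : ℕ} (hn : 3 ≤ n) (a : ℕ → F) (x : Fin n → F)
    (hA : Apoly n x = 0) (hB : Bpoly n a x = 0) : x = 0 := by
  funext j
  have hj := j.isLt
  show x j = 0
  rw [← xe_val x j]
  rcases (by omega : (j:ℕ) = 0 ∨ (j:ℕ) = 1 ∨ (2 ≤ (j:ℕ) ∧ (j:ℕ) ≤ n-2) ∨ (j:ℕ) = n-1)
    with h | h | h | h
  · rw [h, ← cA0 hn x, hA, coeff_zero]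
  · rw [h, ← cB1 hn a x, hB, coeff_zero]
  · rw [← cAmid hn x _ h.1 h.2, hA, coeff_zero]
  · rw [h, ← cAn hn x, hA, coeff_zero]

/-- if B vanishes, x is supported at 0 -/
lemma vec_Bzero {n : ℕ} (hn : 3 ≤ n) (a : ℕ → F)
    (ha0 : ∀ i, 1 ≤ i → i ≤ n - 3 → a i ≠ 0) (x : Fin n → F)
    (hB : Bpoly n a x = 0) (j : Fin n) (hj0 : (j:ℕ) ≠ 0) : x j = 0 := by
  have hj := j.isLt
  rw [← xe_val x j]
  rcases (by omega : (j:ℕ) = 1 ∨ (2 ≤ (j:ℕ) ∧ (j:ℕ) ≤ n-2) ∨ (j:ℕ) = n-1)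
    with h | h | h
  · rw [h, ← cB1 hn a x, hB, coeff_zero]
  · have := cBmid hn a x _ h.1 h.2
    rw [hB, coeff_zero] at this
    exact (mul_eq_zero.mp this.symm).resolve_left (ha0 _ (by omega) (by omega))
  · rw [h, ← cBn1 hn a x, hB, coeff_zero]

/-- if A vanishes, x is supported at 1 -/
lemma vec_Azero {n : ℕ} (hn : 3 ≤ n) (x : Fin n → F)
    (hA : Apoly n x = 0) (j : Fin n) (hj0 : (j:ℕ) ≠ 1) : x j = 0 := by
  have hj := j.isLt
  rw [← xe_val x j]
  rcases (by omega : (j:ℕ) = 0 ∨ (2 ≤ (j:ℕ) ∧ (j:ℕ) ≤ n-2) ∨ (j:ℕ) = n-1)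
    with h | h | h
  · rw [h, ← cA0 hn x, hA, coeff_zero]
  · rw [← cAmid hn x _ h.1 h.2, hA, coeff_zero]
  · rw [h, ← cAn hn x, hA, coeff_zero]


variable {L : Type*} [Field L] [Algebra F L]

/-- a polynomial with coefficients vanishing from degree m on, vanishing at β, is zero -/
lemma vanish {m : ℕ} (b : Module.Basis (Fin m) F L) (β : L)
    (hb : ∀ i : Fin m, b i = β ^ (i : ℕ)) (p : F[X])
    (hdeg : ∀ k, m ≤ k → p.coeff k = 0) (hev : (aeval β) p = 0) : p = 0 := by
  by_contra hp
  have hlc : p.coeff p.natDegree ≠ 0 := by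
    rw [coeff_natDegree]; exact leadingCoeff_ne_zero.mpr hp
  have hnd : p.natDegree < m := by
    by_contra h; exact hlc (hdeg _ (by omega))
  have hsum : ∑ i ∈ Finset.range m, p.coeff i • β ^ i = 0 := by
    rw [← aeval_eq_sum_range' hnd β]; exact hev
  rw [← Fin.sum_univ_eq_sum_range (fun i => p.coeff i • β ^ i) m] at hsum
  have hsum2 : ∑ i : Fin m, p.coeff (i : ℕ) • b i = 0 := by
    rw [← hsum]; exact Finset.sum_congr rfl fun i _ => by rw [hb i]
  have hall := Fintype.linearIndependent_iff.mp b.linearIndependent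
    (fun i => p.coeff (i : ℕ)) hsum2
  exact hlc (hall ⟨p.natDegree, hnd⟩)

lemma Rzero {n m : ℕ} (hn : 3 ≤ n) (hm : 2*n-2 ≤ m) (a : ℕ → F)
    (A B A' B' : F[X]) (SA : MyShape n a A B) (SA' : MyShape n a A' B')
    (b : Module.Basis (Fin m) F L) (β : L) (hb : ∀ i : Fin m, b i = β ^ (i : ℕ)) (hβ : β ≠ 0)
    (hev : (aeval β) (A * B' - A' * B) = 0) : A * B' = A' * B := by
  set R := A * B' - A' * B with hR
  have hc0 : R.coeff 0 = 0 := by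
    rw [hR, coeff_sub, mul_coeff_zero, mul_coeff_zero, SA'.hB0, SA.hB0, mul_zero, mul_zero,
      sub_self]
  have htop : ∀ k, 2*n-1 ≤ k → R.coeff k = 0 := by
    intro k hk
    rw [hR, coeff_sub, coeff_mul, coeff_mul, sub_eq_zero]
    apply Finset.sum_congr rfl
    rintro ⟨i, j⟩ hij
    rw [Finset.HasAntidiagonal.mem_antidiagonal] at hij
    simp only
    by_cases hi : n < i
    · rw [SA.hA_top i hi, SA'.hA_top i hi, zero_mul, zero_mul]
    · by_cases hj : n - 1 < j
      · rw [SA.hB_top j hj, SA'.hB_top j hj, mul_zero, mul_zero]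
      · have hieq : i = n ∧ j = n - 1 := by omega
        rw [hieq.1, hieq.2, SA.hlink, SA'.hlink]
        ring
  set S := R.divX with hS
  have hSdeg : ∀ k, m ≤ k → S.coeff k = 0 := by
    intro k hk
    rw [hS, coeff_divX]
    exact htop _ (by omega)
  have hXS : X * S = R := by
    have := X_mul_divX_add R
    rwa [hc0, map_zero, add_zero] at this
  have hevS : (aeval β) S = 0 := by
    have : β * (aeval β) S = 0 := by
      rw [← hev, ← hXS, map_mul, aeval_X]
    exact (mul_eq_zero.mp this).resolve_left hβ
  have : S = 0 := vanish b β hb S hSdeg hevS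
  have : R = 0 := by rw [← hXS, this, mul_zero]
  exact sub_eq_zero.mp (hR ▸ this)

lemma range_split (n : ℕ) (hn : 3 ≤ n) :
    Finset.range n = insert 0 (insert 1 (Finset.Icc 2 (n-1))) := by
  ext k; simp [Finset.mem_range, Finset.mem_Icc]; omega

lemma Icc_split (n : ℕ) (hn : 3 ≤ n) :
    Finset.Icc 2 (n-1) = insert (n-1) (Finset.Icc 2 (n-2)) := by
  ext k; simp [Finset.mem_Icc]; omega

lemma evalA {n : ℕ} (hn : 3 ≤ n) (β : L) (x : Fin n → F) :
    ∑ j : Fin n, x j • (if (j:ℕ) = 0 then (1:L) else if (j:ℕ) = 1 then 0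
      else if (j:ℕ) = n-1 then β ^ n else β ^ (j:ℕ))
    = (aeval β) (Apoly n x) := by
  have hstep : ∑ j : Fin n, x j • (if (j:ℕ) = 0 then (1:L) else if (j:ℕ) = 1 then 0
      else if (j:ℕ) = n-1 then β ^ n else β ^ (j:ℕ))
      = ∑ k ∈ Finset.range n, (fun k => xe x k • (if k = 0 then (1:L) else if k = 1 then 0
        else if k = n-1 then β ^ n else β ^ k)) k := by
    rw [← Fin.sum_univ_eq_sum_range]
    exact Finset.sum_congr rfl fun j _ => by rw [xe_val]
  rw [hstep, range_split n hn, Finset.sum_insert (by simp), Finset.sum_insert (by simp),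
    Icc_split n hn, Finset.sum_insert (by simp [Finset.mem_Icc]; omega)]
  beta_reduce
  rw [if_pos rfl, if_neg (by omega : ¬ (1 = 0)), if_pos rfl, smul_zero,
    if_neg (by omega : ¬ (n-1 = 0)), if_neg (by omega : ¬ (n-1 = 1)), if_pos rfl]
  have emid : ∀ k ∈ Finset.Icc 2 (n-2),
      (xe x k • (if k = 0 then (1:L) else if k = 1 then 0
        else if k = n-1 then β ^ n else β ^ k)) = xe x k • β ^ k := by
    intro k hk
    rw [Finset.mem_Icc] at hk
    rw [if_neg (by omega : ¬ (k = 0)), if_neg (by omega : ¬ (k = 1)),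
      if_neg (by omega : ¬ (k = n-1))]
  rw [Finset.sum_congr rfl emid]
  simp only [Apoly, map_add, map_mul, map_sum, aeval_C, map_pow, aeval_X,
    Algebra.smul_def, mul_one]
  ring

lemma evalB {n : ℕ} (hn : 3 ≤ n) (β : L) (a : ℕ → F) (x : Fin n → F) :
    β * ∑ j : Fin n, x j • (if (j:ℕ) = 0 then (0:L) else if (j:ℕ) = 1 then 1
      else if (j:ℕ) = n-1 then β ^ (n-2) else algebraMap F L (a ((j:ℕ)-1)) * β ^ ((j:ℕ)-1))
    = (aeval β) (Bpoly n a x) := by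
  have hstep : ∑ j : Fin n, x j • (if (j:ℕ) = 0 then (0:L) else if (j:ℕ) = 1 then 1
      else if (j:ℕ) = n-1 then β ^ (n-2) else algebraMap F L (a ((j:ℕ)-1)) * β ^ ((j:ℕ)-1))
      = ∑ k ∈ Finset.range n, (fun k => xe x k • (if k = 0 then (0:L) else if k = 1 then 1
        else if k = n-1 then β ^ (n-2) else algebraMap F L (a (k-1)) * β ^ (k-1))) k := by
    rw [← Fin.sum_univ_eq_sum_range]
    exact Finset.sum_congr rfl fun j _ => by rw [xe_val]
  rw [hstep, range_split n hn, Finset.sum_insert (by simp), Finset.sum_insert (by simp),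
    Icc_split n hn, Finset.sum_insert (by simp [Finset.mem_Icc]; omega)]
  beta_reduce
  rw [if_pos rfl, if_neg (by omega : ¬ (1 = 0)), if_pos rfl, smul_zero,
    if_neg (by omega : ¬ (n-1 = 0)), if_neg (by omega : ¬ (n-1 = 1)), if_pos rfl]
  have emid : ∀ k ∈ Finset.Icc 2 (n-2),
      (xe x k • (if k = 0 then (0:L) else if k = 1 then 1
        else if k = n-1 then β ^ (n-2) else algebraMap F L (a (k-1)) * β ^ (k-1)))
      = xe x k • (algebraMap F L (a (k-1)) * β ^ (k-1)) := by
    intro k hk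
    rw [Finset.mem_Icc] at hk
    rw [if_neg (by omega : ¬ (k = 0)), if_neg (by omega : ¬ (k = 1)),
      if_neg (by omega : ¬ (k = n-1))]
  rw [Finset.sum_congr rfl emid, mul_add, mul_add, mul_add, Finset.mul_sum]
  have hpow1 : ∀ k ∈ Finset.Icc 2 (n-2),
      β * (xe x k • (algebraMap F L (a (k-1)) * β ^ (k-1)))
      = algebraMap F L (a (k-1) * xe x k) * β ^ k := by
    intro k hk
    rw [Finset.mem_Icc] at hk
    have : β ^ k = β ^ (k-1) * β := by
      rw [← pow_succ]; congr 1; omega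
    rw [this, Algebra.smul_def, map_mul]
    ring
  rw [Finset.sum_congr rfl hpow1]
  have hpow2 : β * (xe x (n-1) • β ^ (n-2)) = algebraMap F L (xe x (n-1)) * β ^ (n-1) := by
    have : β ^ (n-1) = β ^ (n-2) * β := by
      rw [← pow_succ]; congr 1; omega
    rw [this, Algebra.smul_def]
    ring
  rw [hpow2]
  simp only [Bpoly, map_add, map_mul, map_sum, aeval_C, map_pow, aeval_X,
    Algebra.smul_def, mul_one]
  ring


end MRDAux


/-- Expansion `Ψ` of a vector over the extension field `L` into a matrix over `F_q`. -/
noncomputable def expand {Fq L : Type*} [Field Fq] [Field L] [Algebra Fq L]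
    {m n : ℕ} (b : Module.Basis (Fin m) Fq L) (v : Fin n → L) :
    Matrix (Fin m) (Fin n) Fq :=
  Matrix.of fun i j => b.repr (v j) i

/-- Example 3.3 of the paper: with `m ≥ 2n-2`, `n ≤ q+2`, a polynomial basis
`(1, β, …, β^{m-1})` of `F_{q^m}` over `F_q`, and distinct nonzero
`a_1, …, a_{n-3} ∈ F_q`, the `2×n` matrix with rows
`(1, 0, β², β³, …, β^{n-2}, β^n)` and `(0, 1, a₁β, a₂β², …, a_{n-3}β^{n-3}, β^{n-2})`
generates a systematic MRD code: every nonzero codeword, expanded over `F_q`,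
has rank at least `n-1`. -/
theorem stmt18 (Fq L : Type*) [Field Fq] [Fintype Fq] [Field L] [Algebra Fq L]
    (m n : ℕ) (hn : 3 ≤ n) (hm : 2 * n - 2 ≤ m) (hq : n ≤ Fintype.card Fq + 2)
    (β : L) (b : Module.Basis (Fin m) Fq L) (hb : ∀ i : Fin m, b i = β ^ (i : ℕ))
    (a : ℕ → Fq)
    (ha0 : ∀ i, 1 ≤ i → i ≤ n - 3 → a i ≠ 0)
    (hainj : ∀ i j, 1 ≤ i → i ≤ n - 3 → 1 ≤ j → j ≤ n - 3 → a i = a j → i = j)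
    (G : Matrix (Fin 2) (Fin n) L)
    (hG : ∀ (i : Fin 2) (j : Fin n), G i j =
      if (i : ℕ) = 0 then
        (if (j : ℕ) = 0 then 1 else if (j : ℕ) = 1 then 0
         else if (j : ℕ) = n - 1 then β ^ n else β ^ (j : ℕ))
      else
        (if (j : ℕ) = 0 then 0 else if (j : ℕ) = 1 then 1
         else if (j : ℕ) = n - 1 then β ^ (n - 2)
         else algebraMap Fq L (a ((j : ℕ) - 1)) * β ^ ((j : ℕ) - 1))) :
    ∀ u : Fin 2 → L, u ≠ 0 →
      n - 1 ≤ (expand b (Matrix.vecMul u G)).rank := by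
  classical
  intro u hu
  open Polynomial Finset in
  set w : Fin n → L := Matrix.vecMul u G with hw
  -- the linear combination map
  set ψ : (Fin n → Fq) →ₗ[Fq] L :=
    { toFun := fun x => ∑ j : Fin n, x j • w j
      map_add' := by intro x y; simp [add_smul, Finset.sum_add_distrib]
      map_smul' := by intro c x; simp [smul_smul, Finset.smul_sum] } with hψ
  have hψ_apply : ∀ x : Fin n → Fq, ψ x = ∑ j : Fin n, x j • w j := fun x => rfl
  -- identify the matrix map
  have hcomm : (expand b w).mulVecLin = (b.equivFun.toLinearMap ∘ₗ ψ) := by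
    apply LinearMap.ext; intro x
    funext i
    have h1 : b.repr (∑ j : Fin n, x j • w j) = ∑ j : Fin n, x j • b.repr (w j) := by
      rw [map_sum]
      exact Finset.sum_congr rfl fun j _ => by rw [map_smul]
    show ((expand b w).mulVec x) i = b.equivFun (ψ x) i
    rw [Module.Basis.equivFun_apply, hψ_apply, h1]
    simp only [Matrix.mulVec, dotProduct, _root_.expand, Matrix.of_apply,
      Finsupp.finset_sum_apply, Finsupp.smul_apply, smul_eq_mul]
    exact Finset.sum_congr rfl fun j _ => mul_comm _ _
  have hrank : (expand b w).rank = Module.finrank Fq (LinearMap.range ψ) := by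
    rw [Matrix.rank, hcomm, LinearMap.range_comp]
    exact LinearEquiv.finrank_map_eq b.equivFun _
  have hrn : Module.finrank Fq (LinearMap.range ψ) + Module.finrank Fq (LinearMap.ker ψ)
      = n := by
    rw [LinearMap.finrank_range_add_finrank_ker ψ, Module.finrank_fin_fun]
  -- β is nonzero
  have hβ : β ≠ 0 := by
    have h1 := b.ne_zero ⟨1, by omega⟩
    rw [hb ⟨1, by omega⟩] at h1
    simpa using h1
  -- u components are not both zero
  have hu01 : ¬ (u 0 = 0 ∧ u 1 = 0) := by
    rintro ⟨h0, h1⟩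
    apply hu
    funext i
    fin_cases i
    · exact h0
    · exact h1
  -- G row entries
  have hG0 : ∀ j : Fin n, G 0 j = (if (j:ℕ) = 0 then (1:L) else if (j:ℕ) = 1 then 0
      else if (j:ℕ) = n-1 then β ^ n else β ^ (j:ℕ)) := by
    intro j; rw [hG 0 j]; norm_num
  have hG1 : ∀ j : Fin n, G 1 j = (if (j:ℕ) = 0 then (0:L) else if (j:ℕ) = 1 then 1
      else if (j:ℕ) = n-1 then β ^ (n-2)
      else algebraMap Fq L (a ((j:ℕ)-1)) * β ^ ((j:ℕ)-1)) := by
    intro j; rw [hG 1 j]; norm_num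
  -- translation of the kernel condition
  have hker_eq : ∀ z : Fin n → Fq, ψ z = 0 →
      (u 0 * β) * (aeval β) (Apoly n z) + u 1 * (aeval β) (Bpoly n a z) = 0 := by
    intro z hz
    have h1 : ∑ j : Fin n, z j • w j = 0 := hz
    have hwj : ∀ j : Fin n, w j = u 0 * G 0 j + u 1 * G 1 j := by
      intro j
      rw [hw]
      show (Matrix.vecMul u G) j = _
      rw [Matrix.vecMul, dotProduct]
      rw [Fin.sum_univ_two]
    have hsplit : ∑ j : Fin n, z j • w j
        = u 0 * (∑ j : Fin n, z j • (if (j:ℕ) = 0 then (1:L) else if (j:ℕ) = 1 then 0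
            else if (j:ℕ) = n-1 then β ^ n else β ^ (j:ℕ)))
          + u 1 * (∑ j : Fin n, z j • (if (j:ℕ) = 0 then (0:L) else if (j:ℕ) = 1 then 1
            else if (j:ℕ) = n-1 then β ^ (n-2)
            else algebraMap Fq L (a ((j:ℕ)-1)) * β ^ ((j:ℕ)-1))) := by
      rw [Finset.mul_sum, Finset.mul_sum, ← Finset.sum_add_distrib]
      apply Finset.sum_congr rfl
      intro j _
      rw [hwj j, hG0 j, hG1 j, smul_add, Algebra.mul_smul_comm, Algebra.mul_smul_comm]
    rw [hsplit] at h1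
    rw [← evalA hn β z, ← evalB hn β a z]
    linear_combination β * h1
  -- degree bounds for vanish
  have hdegA : ∀ z : Fin n → Fq, ∀ k, m ≤ k → (Apoly n z).coeff k = 0 := by
    intro z k hk
    exact (shape_AB hn a z).hA_top k (by omega)
  have hdegB : ∀ z : Fin n → Fq, ∀ k, m ≤ k → (Bpoly n a z).coeff k = 0 := by
    intro z k hk
    exact (shape_AB hn a z).hB_top k (by omega)
  -- main kernel bound
  have hker : Module.finrank Fq (LinearMap.ker ψ) ≤ 1 := by
    by_cases hbot : LinearMap.ker ψ = ⊥
    · rw [hbot, finrank_bot]; omega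
    · obtain ⟨x, hxker, hx0⟩ := (Submodule.ne_bot_iff _).mp hbot
      have hspan : LinearMap.ker ψ ≤ Submodule.span Fq {x} := by
        intro x' hx'ker
        rw [Submodule.mem_span_singleton]
        have hxeq := hker_eq x (LinearMap.mem_ker.mp hxker)
        have hx'eq := hker_eq x' (LinearMap.mem_ker.mp hx'ker)
        by_cases hu1 : u 1 = 0
        · -- second row not used: A-polynomials vanish
          have hu0 : u 0 ≠ 0 := fun h => hu01 ⟨h, hu1⟩
          have hAz : ∀ z : Fin n → Fq, ψ z = 0 → Apoly n z = 0 := by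
            intro z hz
            have h2 := hker_eq z hz
            rw [hu1, zero_mul, add_zero] at h2
            have h3 : (aeval β) (Apoly n z) = 0 := by
              rcases mul_eq_zero.mp h2 with h | h
              · exact absurd h (mul_ne_zero hu0 hβ)
              · exact h
            exact vanish b β hb _ (hdegA z) h3
          have hAx := hAz x (LinearMap.mem_ker.mp hxker)
          have hAx' := hAz x' (LinearMap.mem_ker.mp hx'ker)
          set i1 : Fin n := ⟨1, by omega⟩ with hi1
          have hx1 : x i1 ≠ 0 := by
            intro h
            apply hx0
            funext j
            by_cases hj : (j:ℕ) = 1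
            · have : j = i1 := by apply Fin.ext; rw [hj]
              rw [this]; exact h
            · exact vec_Azero hn x hAx j hj
          refine ⟨x' i1 / x i1, ?_⟩
          funext j
          show (x' i1 / x i1) * x j = x' j
          by_cases hj : (j:ℕ) = 1
          · have : j = i1 := by apply Fin.ext; rw [hj]
            rw [this, div_mul_cancel₀ _ hx1]
          · rw [vec_Azero hn x hAx j hj, vec_Azero hn x' hAx' j hj, mul_zero]
        · by_cases hu0 : u 0 = 0
          · -- first row not used: B-polynomials vanish
            have hBz : ∀ z : Fin n → Fq, ψ z = 0 → Bpoly n a z = 0 := by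
              intro z hz
              have h2 := hker_eq z hz
              rw [hu0, zero_mul, zero_mul, zero_add] at h2
              have h3 : (aeval β) (Bpoly n a z) = 0 :=
                (mul_eq_zero.mp h2).resolve_left hu1
              exact vanish b β hb _ (hdegB z) h3
            have hBx := hBz x (LinearMap.mem_ker.mp hxker)
            have hBx' := hBz x' (LinearMap.mem_ker.mp hx'ker)
            set i0 : Fin n := ⟨0, by omega⟩ with hi0
            have hx1 : x i0 ≠ 0 := by
              intro h
              apply hx0
              funext j
              by_cases hj : (j:ℕ) = 0
              · have : j = i0 := by apply Fin.ext; rw [hj]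
                rw [this]; exact h
              · exact vec_Bzero hn a ha0 x hBx j hj
            refine ⟨x' i0 / x i0, ?_⟩
            funext j
            show (x' i0 / x i0) * x j = x' j
            by_cases hj : (j:ℕ) = 0
            · have : j = i0 := by apply Fin.ext; rw [hj]
              rw [this, div_mul_cancel₀ _ hx1]
            · rw [vec_Bzero hn a ha0 x hBx j hj, vec_Bzero hn a ha0 x' hBx' j hj, mul_zero]
          · -- generic case: both rows used
            by_cases hx'0 : x' = 0
            · exact ⟨0, by rw [hx'0, zero_smul]⟩
            -- nonvanishing of all four polynomials
            have key : ∀ z : Fin n → Fq, ψ z = 0 → z ≠ 0 →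
                Apoly n z ≠ 0 ∧ Bpoly n a z ≠ 0 := by
              intro z hz hz0
              have h2 := hker_eq z hz
              constructor
              · intro hA
                rw [hA, map_zero, mul_zero, zero_add] at h2
                have h3 : (aeval β) (Bpoly n a z) = 0 :=
                  (mul_eq_zero.mp h2).resolve_left hu1
                exact hz0 (vec_zero hn a z hA (vanish b β hb _ (hdegB z) h3))
              · intro hB
                rw [hB, map_zero, mul_zero, add_zero] at h2
                have h3 : (aeval β) (Apoly n z) = 0 := by
                  rcases mul_eq_zero.mp h2 with h | h
                  · exact absurd h (mul_ne_zero hu0 hβ)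
                  · exact h
                exact hz0 (vec_zero hn a z (vanish b β hb _ (hdegA z) h3) hB)
            obtain ⟨hAx, hBx⟩ := key x (LinearMap.mem_ker.mp hxker) hx0
            obtain ⟨hAx', hBx'⟩ := key x' (LinearMap.mem_ker.mp hx'ker) hx'0
            -- the cross relation
            have hevR : (aeval β) (Apoly n x * Bpoly n a x' - Apoly n x' * Bpoly n a x)
                = 0 := by
              have hmain : (u 0 * β * u 1) *
                  ((aeval β) (Apoly n x) * (aeval β) (Bpoly n a x')
                    - (aeval β) (Apoly n x') * (aeval β) (Bpoly n a x)) = 0 := by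
                linear_combination (u 1 * (aeval β) (Bpoly n a x')) * hxeq
                  - (u 1 * (aeval β) (Bpoly n a x)) * hx'eq
              have hne : u 0 * β * u 1 ≠ 0 := mul_ne_zero (mul_ne_zero hu0 hβ) hu1
              rw [map_sub, map_mul, map_mul]
              exact (mul_eq_zero.mp hmain).resolve_left hne
            have hrel : Apoly n x * Bpoly n a x' = Apoly n x' * Bpoly n a x :=
              Rzero hn hm a _ _ _ _ (shape_AB hn a x) (shape_AB hn a x') b β hb hβ hevR
            obtain ⟨t, ht0, htA, htB⟩ := polyMain hn a ha0 hainj _ _ _ _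
              (shape_AB hn a x) (shape_AB hn a x') hrel hAx hBx hAx' hBx'
            have := vec_smul hn a ha0 t x x' htA htB
            exact ⟨t, by rw [this]⟩
      calc Module.finrank Fq (LinearMap.ker ψ)
          ≤ Module.finrank Fq (Submodule.span Fq {x}) := Submodule.finrank_mono hspan
        _ = 1 := finrank_span_singleton hx0
  omega
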